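/- Fix a positive integer r and nonnegative integers U, V, W. Then ∑_{A} ∑_{B} ∑_{C} ∏_{i=1}^r (A_i + B_i + C_i + 1)! ≤ 2^(8r+9)·(U + V + W + 1)!, where A, B, C range over all r-tuples of nonnegative integers summing to U, V, W respectively. -/

import Mathlib

open Nat Finset

lemma vdm10 (s W x c : ℕ) : s.choose x * W.choose c ≤ (s+W).choose (x+c) := by
  rw [Nat.add_choose_eq]
  exact Finset.single_le_sum (f := fun p : ℕ × ℕ => s.choose p.1 * W.choose p.2)
    (fun i _ => Nat.zero_le _) (show ((x,c) : ℕ × ℕ) ∈ antidiagonal (x+c) from Finset.HasAntidiagonal.mem_antidiagonal.mpr rfl)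

lemma L2_10 (x y c w : ℕ) :
    (c+w).choose c * ((x+y)! * ((x+c)! * (y+w)!)) ≤ (x+y+(c+w))! * (x ! * y !) := by
  have h1 : (x+y).choose x * x ! * y ! = (x+y)! := by
    have := Nat.add_choose_mul_factorial_mul_factorial y x
    rw [Nat.add_comm y x] at this
    linarith [this]
  have h2 : (x+y+(c+w)).choose (x+c) * (x+c)! * (y+w)! = (x+y+(c+w))! := by
    have := Nat.add_choose_mul_factorial_mul_factorial (y+w) (x+c)
    rw [show (y+w)+(x+c) = x+y+(c+w) by ring] at this
    linarith [this]
  calc (c+w).choose c * ((x+y)! * ((x+c)! * (y+w)!))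
      = ((x+y).choose x * (c+w).choose c) * ((x+c)! * (y+w)!) * (x ! * y !) := by
        rw [← h1]; ring
    _ ≤ (x+y+(c+w)).choose (x+c) * ((x+c)! * (y+w)!) * (x ! * y !) := by
        have := vdm10 (x+y) (c+w) x c
        exact Nat.mul_le_mul_right _ (Nat.mul_le_mul_right _ this)
    _ = (x+y+(c+w))! * (x ! * y !) := by rw [← h2]; ring

lemma L3_10 (y s : ℕ) (h : y ≤ s) : ∀ W, s ! * (y+W)! ≤ (s+W)! * y ! := by
  intro W
  induction W with
  | zero => simp [Nat.mul_comm]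
  | succ n ih =>
      have e1 : (y+(n+1))! = (y+n+1) * (y+n)! := by
        rw [show y+(n+1) = (y+n)+1 by ring, Nat.factorial_succ (y+n)]
      have e2 : (s+(n+1))! = (s+n+1) * (s+n)! := by
        rw [show s+(n+1) = (s+n)+1 by ring, Nat.factorial_succ (s+n)]
      calc s ! * (y+(n+1))! = (y+n+1) * (s ! * (y+n)!) := by rw [e1]; ring
        _ ≤ (y+n+1) * ((s+n)! * y !) := Nat.mul_le_mul_left _ ih
        _ ≤ (s+n+1) * ((s+n)! * y !) := Nat.mul_le_mul_right _ (by omega)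
        _ = (s+(n+1))! * y ! := by rw [e2]; ring

lemma L4_10 (a b : ℕ) : (a+2)! * (b+2)! ≤ 2 * (a+b+2)! := by
  induction a with
  | zero => simp [show (2:ℕ)! = 2 by rfl]
  | succ n ih =>
      have e1 : (n+1+2)! = (n+3) * (n+2)! := by
        rw [show n+1+2 = (n+2)+1 by ring, Nat.factorial_succ (n+2)]
      have e2 : (n+1+b+2)! = (n+b+3) * (n+b+2)! := by
        rw [show n+1+b+2 = (n+b+2)+1 by ring, Nat.factorial_succ (n+b+2)]
      calc (n+1+2)! * (b+2)! = (n+3) * ((n+2)! * (b+2)!) := by rw [e1]; ring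
        _ ≤ (n+3) * (2 * (n+b+2)!) := Nat.mul_le_mul_left _ ih
        _ ≤ (n+b+3) * (2 * (n+b+2)!) := Nat.mul_le_mul_right _ (by omega)
        _ = 2 * (n+1+b+2)! := by rw [e2]; ring

lemma midchoose10 (N c : ℕ) (h2 : 2 ≤ c) (h2' : c + 2 ≤ N) : N*(N-1) ≤ 2 * N.choose c := by
  obtain ⟨a, rfl⟩ : ∃ a, c = a+2 := ⟨c-2, by omega⟩
  obtain ⟨b, rfl⟩ : ∃ b, N = (a+2)+(b+2) := ⟨N-(a+2)-2, by omega⟩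
  have hW : ((a+2)+(b+2)).choose (a+2) * (a+2)! * ((a+2)+(b+2)-(a+2))! = ((a+2)+(b+2))! :=
    Nat.choose_mul_factorial_mul_factorial (by omega)
  rw [show (a+2)+(b+2)-(a+2) = b+2 by omega] at hW
  have hL4 := L4_10 a b
  have key : ((a+2)+(b+2))! ≤ 2 * ((a+2)+(b+2)).choose (a+2) * (a+b+2)! := by
    calc ((a+2)+(b+2))! = ((a+2)+(b+2)).choose (a+2) * ((a+2)! * (b+2)!) := by
          rw [← hW]; ring
      _ ≤ ((a+2)+(b+2)).choose (a+2) * (2 * (a+b+2)!) := Nat.mul_le_mul_left _ hL4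
      _ = 2 * ((a+2)+(b+2)).choose (a+2) * (a+b+2)! := by ring
  have e : ((a+2)+(b+2))! = ((a+b+4) * (a+b+3)) * (a+b+2)! := by
    rw [show (a+2)+(b+2) = (a+b+2)+1+1 by ring, Nat.factorial_succ ((a+b+2)+1),
      Nat.factorial_succ (a+b+2)]
    ring
  rw [e] at key
  have := Nat.le_of_mul_le_mul_right key (Nat.factorial_pos (a+b+2))
  calc ((a+2)+(b+2))*((a+2)+(b+2)-1) = (a+b+4)*(a+b+3) := by
        rw [show (a+2)+(b+2)-1 = a+b+3 by omega, show (a+2)+(b+2) = a+b+4 by ring]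
    _ ≤ 2 * ((a+2)+(b+2)).choose (a+2) := this

lemma key10 (a b W : ℕ) :
    (a+b+1)! * ∑ p ∈ Finset.HasAntidiagonal.antidiagonal W, (a+p.1+1)! * (b+p.2+1)! ≤
      6 * ((a+b+W+1)! * ((a+1)! * (b+1)!)) := by
  set M := (a+b+W+1)! * ((a+1)! * (b+1)!) with hM
  set t : ℕ → ℕ := fun c => (a+b+1)! * ((a+c+1)! * (b+(W-c)+1)!) with ht
  rw [Finset.mul_sum, Finset.Nat.sum_antidiagonal_eq_sum_range_succ_mk]
  show ∑ c ∈ Finset.range (W+1), t c ≤ 6 * M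
  have hdag : ∀ c, c ≤ W → (a+b+2) * (W.choose c * t c) ≤ (a+b+W+2) * M := by
    intro c hc
    have h := L2_10 (a+1) (b+1) c (W-c)
    rw [show c + (W-c) = W by omega] at h
    calc (a+b+2) * (W.choose c * t c)
        = W.choose c * ((a+1+(b+1))! * ((a+1+c)! * (b+1+(W-c))!)) := by
          simp only [ht]; rw [show a+1+(b+1) = (a+b+1)+1 by ring, Nat.factorial_succ (a+b+1),
            show a+1+c = a+c+1 by ring, show b+1+(W-c) = b+(W-c)+1 by ring]
          ring
      _ ≤ (a+1+(b+1)+W)! * ((a+1)! * (b+1)!) := h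
      _ = (a+b+W+2) * M := by
          rw [hM, show a+1+(b+1)+W = (a+b+W+1)+1 by ring, Nat.factorial_succ (a+b+W+1)]
          ring
  have hend0 : t 0 ≤ M := by
    have h := L3_10 (b+1) (a+b+1) (by omega) W
    calc t 0 = (a+1)! * ((a+b+1)! * (b+1+W)!) := by
          simp only [ht]; rw [show b+(W-0)+1 = b+1+W by omega, show a+0+1 = a+1 by ring]; ring
      _ ≤ (a+1)! * ((a+b+1+W)! * (b+1)!) := Nat.mul_le_mul_left _ h
      _ = M := by rw [hM, show a+b+1+W = a+b+W+1 by ring]; ring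
  have hendW : t W ≤ M := by
    have h := L3_10 (a+1) (a+b+1) (by omega) W
    calc t W = (b+1)! * ((a+b+1)! * (a+1+W)!) := by
          simp only [ht]; rw [show b+(W-W)+1 = b+1 by omega, show a+W+1 = a+1+W by ring]; ring
      _ ≤ (b+1)! * ((a+b+1+W)! * (a+1)!) := Nat.mul_le_mul_left _ h
      _ = M := by rw [hM, show a+b+1+W = a+b+W+1 by ring]; ring
  have hint : ∑ c ∈ Finset.Ico 1 W, t c ≤ 4 * M := by
    rcases le_or_gt W 1 with h1 | h1
    · rw [Finset.Ico_eq_empty (by omega)]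
      simp
    · set K := (a+b+W+2) * M with hK
      have hb : ∀ c ∈ Finset.Ico 1 W, (a+b+2)*W*(W-1) * t c ≤
          2*K + ((if c = 1 then (W-1)*K else 0) + (if c = W-1 then (W-1)*K else 0)) := by
        intro c hc
        rw [Finset.mem_Ico] at hc
        rcases eq_or_ne c 1 with rfl | hc1
        · have hd := hdag 1 (by omega)
          rw [Nat.choose_one_right] at hd
          have : (a+b+2)*W*(W-1) * t 1 ≤ (W-1)*K :=
            calc (a+b+2)*W*(W-1) * t 1 = (W-1) * ((a+b+2)*(W * t 1)) := by ring
              _ ≤ (W-1) * K := Nat.mul_le_mul_left _ hd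
          rw [if_pos rfl]
          exact le_trans this (by omega)
        · rcases eq_or_ne c (W-1) with rfl | hc2
          · have hd := hdag (W-1) (by omega)
            rw [show W.choose (W-1) = W by
              rw [show W - 1 = W - (1 : ℕ) by rfl, Nat.choose_symm (by omega),
                Nat.choose_one_right]] at hd
            have : (a+b+2)*W*(W-1) * t (W-1) ≤ (W-1)*K :=
              calc (a+b+2)*W*(W-1) * t (W-1) = (W-1) * ((a+b+2)*(W * t (W-1))) := by ring
                _ ≤ (W-1) * K := Nat.mul_le_mul_left _ hd
            rw [if_pos rfl, if_neg hc1]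
            exact le_trans this (by omega)
          · have hmc := midchoose10 W c (by omega) (by omega)
            rw [if_neg hc1, if_neg hc2]
            have : (a+b+2)*W*(W-1)*t c ≤ 2*K :=
              calc (a+b+2)*W*(W-1)*t c = (W*(W-1)) * ((a+b+2) * t c) := by ring
                _ ≤ (2*W.choose c) * ((a+b+2) * t c) := Nat.mul_le_mul_right _ hmc
                _ = 2 * ((a+b+2)*(W.choose c * t c)) := by ring
                _ ≤ 2 * K := Nat.mul_le_mul_left _ (hdag c (by omega))
            omega
      have hsum := Finset.sum_le_sum hb
      rw [← Finset.mul_sum] at hsum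
      rw [Finset.sum_add_distrib, Finset.sum_const, Finset.sum_add_distrib,
        Finset.sum_ite_eq' (Finset.Ico 1 W) 1 (fun _ => (W-1)*K),
        Finset.sum_ite_eq' (Finset.Ico 1 W) (W-1) (fun _ => (W-1)*K),
        if_pos (Finset.mem_Ico.mpr ⟨le_refl 1, h1⟩),
        if_pos (Finset.mem_Ico.mpr ⟨by omega, by omega⟩), Nat.card_Ico, smul_eq_mul] at hsum
      have hle : a+b+W+2 ≤ (a+b+2)*W := by nlinarith
      have hfin : (W-1)*(2*K) + ((W-1)*K + (W-1)*K) ≤ ((a+b+2)*W*(W-1)) * (4*M) :=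
        calc (W-1)*(2*K) + ((W-1)*K + (W-1)*K) = (W-1)*(4*K) := by ring
          _ = (4*(W-1)) * ((a+b+W+2)*M) := by rw [hK]; ring
          _ ≤ (4*(W-1)) * (((a+b+2)*W)*M) := Nat.mul_le_mul_left _ (Nat.mul_le_mul_right _ hle)
          _ = ((a+b+2)*W*(W-1)) * (4*M) := by ring
      have := le_trans hsum hfin
      exact Nat.le_of_mul_le_mul_left this
        (Nat.mul_pos (Nat.mul_pos (by omega) (by omega)) (by omega))
  rcases Nat.eq_zero_or_pos W with rfl | hWpos
  · rw [Finset.sum_range_one]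
    have := hend0
    omega
  · rw [Finset.sum_range_succ, Finset.range_eq_Ico, Finset.sum_eq_sum_Ico_succ_bot hWpos]
    have h0 := hend0; have hW := hendW; have hi := hint
    simp only [Nat.zero_add]
    omega


lemma sum_adT_succ10 {M : Type*} [AddCommMonoid M] (k n : ℕ) (f : (Fin (k+1) → ℕ) → M) :
    ∑ x ∈ Finset.Nat.antidiagonalTuple (k+1) n, f x
      = ∑ p ∈ Finset.HasAntidiagonal.antidiagonal n,
          ∑ y ∈ Finset.Nat.antidiagonalTuple k p.2, f (Fin.cons p.1 y) := by
  rw [Finset.sum_sigma' (Finset.HasAntidiagonal.antidiagonal n)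
    (fun p => Finset.Nat.antidiagonalTuple k p.2) (fun p y => f (Fin.cons p.1 y))]
  refine Finset.sum_nbij'
    (i := fun x => (⟨(x 0, ∑ i : Fin k, x i.succ), Fin.tail x⟩ :
      Σ _p : ℕ × ℕ, (Fin k → ℕ)))
    (j := fun q => Fin.cons q.1.1 q.2) ?_ ?_ ?_ ?_ ?_
  · intro x hx
    rw [Finset.Nat.mem_antidiagonalTuple, Fin.sum_univ_succ] at hx
    rw [Finset.mem_sigma]
    constructor
    · exact Finset.HasAntidiagonal.mem_antidiagonal.mpr hx
    · exact Finset.Nat.mem_antidiagonalTuple.mpr rfl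
  · rintro ⟨⟨u, v⟩, y⟩ hq
    rw [Finset.mem_sigma] at hq
    obtain ⟨h1, h2⟩ := hq
    rw [Finset.HasAntidiagonal.mem_antidiagonal] at h1
    rw [Finset.Nat.mem_antidiagonalTuple] at h2
    rw [Finset.Nat.mem_antidiagonalTuple, Fin.sum_cons]
    simp only at h1 h2 ⊢
    rw [h2, h1]
  · intro x _
    exact Fin.cons_self_tail x
  · rintro ⟨⟨u, v⟩, y⟩ hq
    rw [Finset.mem_sigma] at hq
    obtain ⟨_, h2⟩ := hq
    rw [Finset.Nat.mem_antidiagonalTuple] at h2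
    simp only [Fin.cons_zero, Fin.cons_succ, Fin.tail_cons]
    congr 1
    simp [h2]
  · intro x _
    rw [Fin.cons_self_tail]

lemma M10 : ∀ (r W : ℕ) (d : Fin r → ℕ),
    (∑ i, d i + 1)! * ∑ C ∈ Finset.Nat.antidiagonalTuple r W, ∏ i, (d i + C i + 1)!
      ≤ 6^r * ((∑ i, d i + W + 1)! * ∏ i, (d i + 1)!) := by
  intro r
  induction r with
  | zero =>
      intro W d
      cases W with
      | zero => simp
      | succ n => simp
  | succ k ih =>
      intro W d
      rw [sum_adT_succ10]
      set d0 := d 0 with hd0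
      set d' := Fin.tail d with hd'
      set D' := ∑ i, d' i with hD'
      set P' := ∏ i, (d' i + 1)! with hP'
      set S' : ℕ → ℕ :=
        fun w => ∑ y ∈ Finset.Nat.antidiagonalTuple k w, ∏ i, (d' i + y i + 1)! with hS'
      have hsd : ∑ i, d i = d0 + D' := by
        rw [Fin.sum_univ_succ]; rfl
      have hpd : ∏ i, (d i + 1)! = (d0 + 1)! * P' := by
        rw [Fin.prod_univ_succ]; rfl
      have hin : ∀ p : ℕ × ℕ,
          (∑ y ∈ Finset.Nat.antidiagonalTuple k p.2, ∏ i, (d i + (Fin.cons p.1 y : Fin (k+1) → ℕ) i + 1)!)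
            = (d0 + p.1 + 1)! * S' p.2 := by
        intro p
        rw [hS', Finset.mul_sum]
        refine Finset.sum_congr rfl fun y _ => ?_
        rw [Fin.prod_univ_succ]
        simp [Fin.cons_zero, Fin.cons_succ, hd', Fin.tail, hd0]
      rw [hsd, hpd,
        show (∑ p ∈ Finset.HasAntidiagonal.antidiagonal W,
            ∑ y ∈ Finset.Nat.antidiagonalTuple k p.2, ∏ i, (d i + (Fin.cons p.1 y : Fin (k+1) → ℕ) i + 1)!)
          = ∑ p ∈ Finset.HasAntidiagonal.antidiagonal W, (d0 + p.1 + 1)! * S' p.2 from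
          Finset.sum_congr rfl fun p _ => hin p]
      refine Nat.le_of_mul_le_mul_left ?_ (Nat.factorial_pos (D'+1))
      have ihp : ∀ p : ℕ × ℕ, (D'+1)! * S' p.2 ≤ 6^k * ((D'+p.2+1)! * P') :=
        fun p => ih p.2 d'
      calc (D'+1)! * ((d0 + D' + 1)! * ∑ p ∈ Finset.HasAntidiagonal.antidiagonal W, (d0+p.1+1)! * S' p.2)
          = ∑ p ∈ Finset.HasAntidiagonal.antidiagonal W,
              (d0+D'+1)! * ((d0+p.1+1)! * ((D'+1)! * S' p.2)) := by
            simp only [Finset.mul_sum]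
            exact Finset.sum_congr rfl fun p _ => by ring
        _ ≤ ∑ p ∈ Finset.HasAntidiagonal.antidiagonal W,
              (d0+D'+1)! * ((d0+p.1+1)! * (6^k * ((D'+p.2+1)! * P'))) :=
            Finset.sum_le_sum fun p _ =>
              Nat.mul_le_mul_left _ (Nat.mul_le_mul_left _ (ihp p))
        _ = (6^k * P') * ((d0+D'+1)! *
              ∑ p ∈ Finset.HasAntidiagonal.antidiagonal W, (d0+p.1+1)! * (D'+p.2+1)!) := by
            simp only [Finset.mul_sum]
            exact Finset.sum_congr rfl fun p _ => by ring
        _ ≤ (6^k * P') * (6 * ((d0+D'+W+1)! * ((d0+1)! * (D'+1)!))) :=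
            Nat.mul_le_mul_left _ (key10 d0 D' W)
        _ = (D'+1)! * (6^(k+1) * ((d0 + D' + W + 1)! * ((d0+1)! * P'))) := by ring

theorem stmt_10 (r U V W : ℕ) (hr : 0 < r) :
    ∑ A ∈ Finset.Nat.antidiagonalTuple r U,
      ∑ B ∈ Finset.Nat.antidiagonalTuple r V,
        ∑ C ∈ Finset.Nat.antidiagonalTuple r W,
          ∏ i, Nat.factorial (A i + B i + C i + 1)
      ≤ 2 ^ (8 * r + 9) * Nat.factorial (U + V + W + 1) := by
  have h3 : ∀ A ∈ Finset.Nat.antidiagonalTuple r U, ∀ B ∈ Finset.Nat.antidiagonalTuple r V,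
      (U+V+1)! * ∑ C ∈ Finset.Nat.antidiagonalTuple r W, ∏ i, (A i + B i + C i + 1)!
        ≤ 6^r * ((U+V+W+1)! * ∏ i, (A i + B i + 1)!) := by
    intro A hA B hB
    have hU : ∑ i, A i = U := Finset.Nat.mem_antidiagonalTuple.mp hA
    have hV : ∑ i, B i = V := Finset.Nat.mem_antidiagonalTuple.mp hB
    have hd := M10 r W (fun i => A i + B i)
    rw [show ∑ i, (A i + B i) = U + V by rw [Finset.sum_add_distrib, hU, hV]] at hd
    exact hd
  have h2 : ∀ A ∈ Finset.Nat.antidiagonalTuple r U,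
      (U+1)! * ∑ B ∈ Finset.Nat.antidiagonalTuple r V, ∏ i, (A i + B i + 1)!
        ≤ 6^r * ((U+V+1)! * ∏ i, (A i + 1)!) := by
    intro A hA
    have hU : ∑ i, A i = U := Finset.Nat.mem_antidiagonalTuple.mp hA
    have hd := M10 r V A
    rw [hU] at hd
    exact hd
  have h1 : ∑ A ∈ Finset.Nat.antidiagonalTuple r U, ∏ i, (A i + 1)! ≤ 6^r * (U+1)! := by
    have hd := M10 r U (fun _ => 0)
    simpa using hd
  set T3 := ∑ A ∈ Finset.Nat.antidiagonalTuple r U,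
      ∑ B ∈ Finset.Nat.antidiagonalTuple r V,
        ∑ C ∈ Finset.Nat.antidiagonalTuple r W, ∏ i, (A i + B i + C i + 1)! with hT3
  set S2 := ∑ A ∈ Finset.Nat.antidiagonalTuple r U,
      ∑ B ∈ Finset.Nat.antidiagonalTuple r V, ∏ i, (A i + B i + 1)! with hS2
  set S1 := ∑ A ∈ Finset.Nat.antidiagonalTuple r U, ∏ i, (A i + 1)! with hS1
  have step_a : (U+V+1)! * T3 ≤ 6^r * ((U+V+W+1)! * S2) := by
    rw [hT3, hS2]
    simp only [Finset.mul_sum]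
    refine Finset.sum_le_sum fun A hA => ?_
    refine Finset.sum_le_sum fun B hB => ?_
    rw [← Finset.mul_sum]
    exact h3 A hA B hB
  have step_b : (U+1)! * S2 ≤ 6^r * ((U+V+1)! * S1) := by
    rw [hS2, hS1]
    simp only [Finset.mul_sum]
    refine Finset.sum_le_sum fun A hA => ?_
    rw [← Finset.mul_sum]
    exact h2 A hA
  have main : ∀ t3 s2 s1 : ℕ, (U+V+1)! * t3 ≤ 6^r * ((U+V+W+1)! * s2) →
      (U+1)! * s2 ≤ 6^r * ((U+V+1)! * s1) → s1 ≤ 6^r * (U+1)! →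
      t3 ≤ (6^r * (6^r * 6^r)) * (U+V+W+1)! := by
    intro t3 s2 s1 ha hb hc
    refine Nat.le_of_mul_le_mul_left ?_
      (Nat.mul_pos (Nat.factorial_pos (U+1)) (Nat.factorial_pos (U+V+1)))
    calc ((U+1)! * (U+V+1)!) * t3 = (U+1)! * ((U+V+1)! * t3) := by ring
      _ ≤ (U+1)! * (6^r * ((U+V+W+1)! * s2)) := Nat.mul_le_mul_left _ ha
      _ = 6^r * ((U+V+W+1)! * ((U+1)! * s2)) := by ring
      _ ≤ 6^r * ((U+V+W+1)! * (6^r * ((U+V+1)! * s1))) :=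
          Nat.mul_le_mul_left _ (Nat.mul_le_mul_left _ hb)
      _ ≤ 6^r * ((U+V+W+1)! * (6^r * ((U+V+1)! * (6^r * (U+1)!)))) :=
          Nat.mul_le_mul_left _ (Nat.mul_le_mul_left _ (Nat.mul_le_mul_left _
            (Nat.mul_le_mul_left _ hc)))
      _ = ((U+1)! * (U+V+1)!) * ((6^r * (6^r * 6^r)) * (U+V+W+1)!) := by ring
  have main' := main T3 S2 S1 step_a step_b h1
  refine le_trans main' ?_
  refine Nat.mul_le_mul_right _ ?_
  calc 6^r * (6^r * 6^r) = (6*(6*6))^r := by rw [← mul_pow, ← mul_pow]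
    _ ≤ (2^8)^r := Nat.pow_le_pow_left (by norm_num) r
    _ = 2^(8*r) := (pow_mul 2 8 r).symm
    _ ≤ 2^(8*r+9) := Nat.pow_le_pow_right (by norm_num) (Nat.le_add_right _ 9)
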